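/- Let b < 0 and let V₁(t) = ∫₀¹ (2−x)·μ̄(x,t)² dx where μ̄ solves μ̄_t = b·μ̄_x + X̃(t), μ̄(0,t) = 0, with X̃ ∈ L²(0,∞) ∩ L^∞. Then V₁'(t) ≤ (b/4)·V₁(t) + (something proportional to X̃(t)²), and consequently √V₁ ∈ L²(0,∞) ∩ L^∞(0,∞). -/

import Mathlib

open MeasureTheory Set intervalIntegral Metric

/-- Differentiation under the integral sign for our specific integral. -/
lemma stmt15_deriv (b : ℝ) (μbar μbarx : ℝ → ℝ → ℝ) (Xt : ℝ → ℝ)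
    (hcont : Continuous fun p : ℝ × ℝ => μbar p.1 p.2)
    (hcontx : Continuous fun p : ℝ × ℝ => μbarx p.1 p.2)
    (hXcont : Continuous Xt)
    (ht : ∀ x t : ℝ, HasDerivAt (fun s => μbar x s) (b * μbarx x t + Xt t) t)
    (t₀ : ℝ) :
    HasDerivAt (fun t => ∫ x in (0:ℝ)..1, (2 - x) * (μbar x t) ^ 2)
      (∫ x in (0:ℝ)..1, (2 - x) * ((2:ℝ) * μbar x t₀ ^ 1 * (b * μbarx x t₀ + Xt t₀))) t₀ := by
  set F' : ℝ → ℝ → ℝ := fun t x => (2 - x) * ((2:ℝ) * μbar x t ^ 1 * (b * μbarx x t + Xt t))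
    with hF'
  have hcF' : Continuous fun p : ℝ × ℝ => F' p.2 p.1 := by
    apply Continuous.mul
    · exact continuous_const.sub continuous_fst
    · exact ((continuous_const.mul (hcont.pow 1)).mul
        ((continuous_const.mul hcontx).add (hXcont.comp continuous_snd)))
  -- bound on the compact set
  obtain ⟨C, hC⟩ := (isCompact_Icc.prod isCompact_Icc :
      IsCompact (Icc (0:ℝ) 1 ×ˢ Icc (t₀ - 1) (t₀ + 1))).exists_bound_of_continuousOn
      hcF'.continuousOn
  have key := intervalIntegral.hasDerivAt_integral_of_dominated_loc_of_deriv_le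
    (F := fun t x => (2 - x) * (μbar x t) ^ 2) (F' := F') (x₀ := t₀)
    (a := (0:ℝ)) (b := 1) (μ := volume) (bound := fun _ => C) (Metric.ball_mem_nhds t₀ one_pos)
    ?_ ?_ ?_ ?_ ?_ ?_
  · exact key.2
  · filter_upwards with t
    exact (((continuous_const.sub continuous_id).mul
      ((hcont.comp (continuous_id.prodMk continuous_const)).pow 2))).aestronglyMeasurable
  · exact (((continuous_const.sub continuous_id).mul
      ((hcont.comp (continuous_id.prodMk continuous_const)).pow 2))).intervalIntegrable 0 1
  · exact (hcF'.comp (continuous_id.prodMk continuous_const)).aestronglyMeasurable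
  · apply ae_of_all
    intro x hx t htb
    have hx' : x ∈ Icc (0:ℝ) 1 := by
      rw [Set.uIoc_of_le (by norm_num : (0:ℝ) ≤ 1)] at hx
      exact ⟨le_of_lt hx.1, hx.2⟩
    have htI : t ∈ Icc (t₀ - 1) (t₀ + 1) := by
      rw [Real.ball_eq_Ioo] at htb
      exact ⟨le_of_lt htb.1, le_of_lt htb.2⟩
    exact hC (x, t) ⟨hx', htI⟩
  · exact intervalIntegrable_const
  · apply ae_of_all
    intro x _ t _
    have h1 : HasDerivAt (fun s => (μbar x s) ^ 2)
        ((2:ℕ) * μbar x t ^ (2 - 1) * (b * μbarx x t + Xt t)) t := (ht x t).pow 2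
    have h2 := h1.const_mul (2 - x)
    simpa [hF'] using h2

/-- The energy inequality at a fixed time. -/
lemma stmt15_ineq (b : ℝ) (hb : b < 0) (m mx : ℝ → ℝ) (X : ℝ)
    (hmc : Continuous m) (hmxc : Continuous mx)
    (hd : ∀ x, HasDerivAt m (mx x) x) (hm0 : m 0 = 0) :
    (∫ x in (0:ℝ)..1, (2 - x) * ((2:ℝ) * m x ^ 1 * (b * mx x + X)))
      ≤ (b / 4) * (∫ x in (0:ℝ)..1, (2 - x) * m x ^ 2) + (6 / (-b)) * X ^ 2 := by
  have h01 : (0:ℝ) ≤ 1 := by norm_num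
  have hbx : (0:ℝ) < -b := by linarith
  -- integration by parts
  have hibp := intervalIntegral.integral_eq_sub_of_hasDerivAt (a := (0:ℝ)) (b := 1)
    (f := fun x => (2 - x) * m x ^ 2)
    (f' := fun x => (-1) * m x ^ 2 + (2 - x) * ((2:ℝ) * m x ^ 1 * mx x))
    (fun x _ => by
      have h1 : HasDerivAt (fun x : ℝ => 2 - x) (-1) x := by
        simpa using (hasDerivAt_id x).const_sub 2
      have h2 : HasDerivAt (fun x => m x ^ 2) ((2:ℕ) * m x ^ (2 - 1) * mx x) x := (hd x).pow 2
      have h3 : HasDerivAt (fun y => (2 - y) * m y ^ 2) _ x := h1.mul h2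
      simpa using h3)
    ((by fun_prop : Continuous fun x : ℝ =>
      (-1) * m x ^ 2 + (2 - x) * ((2:ℝ) * m x ^ 1 * mx x)).intervalIntegrable 0 1)
  simp only [hm0] at hibp
  have hI1 : (∫ x in (0:ℝ)..1, (2 - x) * ((2:ℝ) * m x ^ 1 * mx x))
      = m 1 ^ 2 + ∫ x in (0:ℝ)..1, m x ^ 2 := by
    have hsplit : (∫ x in (0:ℝ)..1, ((-1) * m x ^ 2 + (2 - x) * ((2:ℝ) * m x ^ 1 * mx x)))
        = (∫ x in (0:ℝ)..1, (-1) * m x ^ 2) + ∫ x in (0:ℝ)..1, (2 - x) * ((2:ℝ) * m x ^ 1 * mx x) :=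
      intervalIntegral.integral_add
        ((by fun_prop : Continuous fun x : ℝ => (-1) * m x ^ 2).intervalIntegrable 0 1)
        ((by fun_prop : Continuous fun x : ℝ =>
          (2 - x) * ((2:ℝ) * m x ^ 1 * mx x)).intervalIntegrable 0 1)
    have hneg : (∫ x in (0:ℝ)..1, (-1) * m x ^ 2) = (-1) * ∫ x in (0:ℝ)..1, m x ^ 2 :=
      intervalIntegral.integral_const_mul _ _
    rw [hsplit, hneg] at hibp
    nlinarith [hibp]
  -- split the main integral
  have hDsplit : (∫ x in (0:ℝ)..1, (2 - x) * ((2:ℝ) * m x ^ 1 * (b * mx x + X)))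
      = b * (∫ x in (0:ℝ)..1, (2 - x) * ((2:ℝ) * m x ^ 1 * mx x))
        + ∫ x in (0:ℝ)..1, 2 * (2 - x) * m x * X := by
    rw [← intervalIntegral.integral_const_mul, ← intervalIntegral.integral_add
      ((by fun_prop : Continuous fun x : ℝ =>
        b * ((2 - x) * ((2:ℝ) * m x ^ 1 * mx x))).intervalIntegrable 0 1)
      ((by fun_prop : Continuous fun x : ℝ => 2 * (2 - x) * m x * X).intervalIntegrable 0 1)]
    apply intervalIntegral.integral_congr
    intro x _
    ring
  -- bound b * ∫ m² ≤ (b/2) * ∫ (2-x) m²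
  have hmono : (∫ x in (0:ℝ)..1, (2 - x) * m x ^ 2) ≤ ∫ x in (0:ℝ)..1, 2 * m x ^ 2 := by
    apply intervalIntegral.integral_mono_on h01
      ((by fun_prop : Continuous fun x : ℝ => (2 - x) * m x ^ 2).intervalIntegrable 0 1)
      ((by fun_prop : Continuous fun x : ℝ => 2 * m x ^ 2).intervalIntegrable 0 1)
    intro x hx
    nlinarith [sq_nonneg (m x), hx.1, hx.2]
  have h2int : (∫ x in (0:ℝ)..1, 2 * m x ^ 2) = 2 * ∫ x in (0:ℝ)..1, m x ^ 2 :=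
    intervalIntegral.integral_const_mul _ _
  -- bound the cross term
  have hcross : (∫ x in (0:ℝ)..1, 2 * (2 - x) * m x * X)
      ≤ (-b / 4) * (∫ x in (0:ℝ)..1, (2 - x) * m x ^ 2) + (6 / (-b)) * X ^ 2 := by
    have hrhs : (∫ x in (0:ℝ)..1, ((-b / 4) * ((2 - x) * m x ^ 2) + (4 / (-b)) * X ^ 2 * (2 - x)))
        = (-b / 4) * (∫ x in (0:ℝ)..1, (2 - x) * m x ^ 2)
          + (4 / (-b)) * X ^ 2 * ∫ x in (0:ℝ)..1, (2 - x) := by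
      rw [intervalIntegral.integral_add
        ((by fun_prop : Continuous fun x : ℝ =>
          (-b / 4) * ((2 - x) * m x ^ 2)).intervalIntegrable 0 1)
        ((by fun_prop : Continuous fun x : ℝ =>
          (4 / (-b)) * X ^ 2 * (2 - x)).intervalIntegrable 0 1),
        intervalIntegral.integral_const_mul, intervalIntegral.integral_const_mul]
    have h32 : (∫ x in (0:ℝ)..1, (2 - x)) = 3 / 2 := by
      rw [intervalIntegral.integral_sub intervalIntegrable_const
        intervalIntegral.intervalIntegrable_id]
      simp
      norm_num
    have hle : (∫ x in (0:ℝ)..1, 2 * (2 - x) * m x * X)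
        ≤ ∫ x in (0:ℝ)..1, ((-b / 4) * ((2 - x) * m x ^ 2) + (4 / (-b)) * X ^ 2 * (2 - x)) := by
      apply intervalIntegral.integral_mono_on h01
        ((by fun_prop : Continuous fun x : ℝ => 2 * (2 - x) * m x * X).intervalIntegrable 0 1)
        ((by fun_prop : Continuous fun x : ℝ =>
          (-b / 4) * ((2 - x) * m x ^ 2) + (4 / (-b)) * X ^ 2 * (2 - x)).intervalIntegrable 0 1)
      intro x hx
      have h2x : (0:ℝ) ≤ 2 - x := by linarith [hx.2]
      have key : 2 * m x * X ≤ (-b / 4) * m x ^ 2 + (4 / (-b)) * X ^ 2 := by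
        have hb0 : b ≠ 0 := ne_of_lt hb
        have hb4X : (-b) * ((4 / (-b)) * X ^ 2) = 4 * X ^ 2 := by
          field_simp
        have hsq := sq_nonneg ((-b / 2) * m x - 2 * X)
        nlinarith [hsq, hb4X, hbx, mul_pos hbx hbx]
      calc 2 * (2 - x) * m x * X = (2 - x) * (2 * m x * X) := by ring
        _ ≤ (2 - x) * ((-b / 4) * m x ^ 2 + (4 / (-b)) * X ^ 2) :=
            mul_le_mul_of_nonneg_left key h2x
        _ = (-b / 4) * ((2 - x) * m x ^ 2) + (4 / (-b)) * X ^ 2 * (2 - x) := by ring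
    rw [hrhs, h32] at hle
    calc (∫ x in (0:ℝ)..1, 2 * (2 - x) * m x * X)
        ≤ (-b / 4) * (∫ x in (0:ℝ)..1, (2 - x) * m x ^ 2) + (4 / (-b)) * X ^ 2 * (3/2) := hle
      _ = (-b / 4) * (∫ x in (0:ℝ)..1, (2 - x) * m x ^ 2) + (6 / (-b)) * X ^ 2 := by
          congr 1
          ring
  -- combine
  have hm1 : b * m 1 ^ 2 ≤ 0 := mul_nonpos_of_nonpos_of_nonneg hb.le (sq_nonneg _)
  have hbI : b * (∫ x in (0:ℝ)..1, m x ^ 2) ≤ (b / 2) * ∫ x in (0:ℝ)..1, (2 - x) * m x ^ 2 := by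
    nlinarith [hmono, h2int]
  rw [hDsplit, hI1]
  nlinarith [hcross, hm1, hbI]



theorem stmt15 (b : ℝ) (hb : b < 0)
    (μbar μbarx : ℝ → ℝ → ℝ) (Xt : ℝ → ℝ)
    (hcont : Continuous fun p : ℝ × ℝ => μbar p.1 p.2)
    (hcontx : Continuous fun p : ℝ × ℝ => μbarx p.1 p.2)
    (hXL2 : MeasureTheory.IntegrableOn (fun t => (Xt t) ^ 2) (Set.Ici (0 : ℝ)))
    (hXLinf : ∃ M : ℝ, ∀ t : ℝ, 0 ≤ t → |Xt t| ≤ M)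
    (hx : ∀ x t : ℝ, HasDerivAt (fun y => μbar y t) (μbarx x t) x)
    (ht : ∀ x t : ℝ, HasDerivAt (fun s => μbar x s) (b * μbarx x t + Xt t) t)
    (hbc : ∀ t : ℝ, μbar 0 t = 0)
    (V1 : ℝ → ℝ)
    (hV1 : ∀ t : ℝ, V1 t = ∫ x in (0 : ℝ)..1, (2 - x) * (μbar x t) ^ 2) :
    (∃ C : ℝ, 0 ≤ C ∧ ∃ V1' : ℝ → ℝ,
      (∀ t : ℝ, 0 ≤ t → HasDerivAt V1 (V1' t) t) ∧
      (∀ t : ℝ, 0 ≤ t → V1' t ≤ (b / 4) * V1 t + C * (Xt t) ^ 2)) ∧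
    MeasureTheory.IntegrableOn V1 (Set.Ici (0 : ℝ)) ∧
    (∃ M : ℝ, ∀ t : ℝ, 0 ≤ t → V1 t ≤ M) := by
  have hbx : (0:ℝ) < -b := by linarith
  -- Xt is continuous
  have hXeq : ∀ t, Xt t = -(b * μbarx 0 t) := by
    intro t
    have h1 : HasDerivAt (fun s => μbar 0 s) (b * μbarx 0 t + Xt t) t := ht 0 t
    have h2 : HasDerivAt (fun _ : ℝ => (0:ℝ)) 0 t := hasDerivAt_const t 0
    have he : (fun s => μbar 0 s) = fun _ : ℝ => (0:ℝ) := funext hbc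
    rw [he] at h1
    have := h1.unique h2
    linarith
  have hXcont : Continuous Xt := by
    have : Continuous fun t => -(b * μbarx 0 t) := by fun_prop
    exact this.congr fun t => (hXeq t).symm
  have hV1fun : V1 = fun t => ∫ x in (0:ℝ)..1, (2 - x) * (μbar x t) ^ 2 := funext hV1
  -- the derivative
  set D : ℝ → ℝ := fun t =>
    ∫ x in (0:ℝ)..1, (2 - x) * ((2:ℝ) * μbar x t ^ 1 * (b * μbarx x t + Xt t)) with hD
  have hDeriv : ∀ t : ℝ, HasDerivAt V1 (D t) t := by
    intro t
    rw [hV1fun]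
    exact stmt15_deriv b μbar μbarx Xt hcont hcontx hXcont ht t
  -- the inequality with C = 6/(-b)
  set C : ℝ := 6 / (-b) with hCdef
  have hC0 : 0 ≤ C := le_of_lt (by positivity)
  have hIneq : ∀ t : ℝ, D t ≤ (b / 4) * V1 t + C * (Xt t) ^ 2 := by
    intro t
    rw [hV1 t]
    exact stmt15_ineq b hb (fun x => μbar x t) (fun x => μbarx x t) (Xt t)
      (hcont.comp (continuous_id.prodMk continuous_const))
      (hcontx.comp (continuous_id.prodMk continuous_const))
      (fun x => hx x t) (hbc t)
  -- V1 is nonnegative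
  have hV1nonneg : ∀ t, 0 ≤ V1 t := by
    intro t
    rw [hV1 t]
    apply intervalIntegral.integral_nonneg (by norm_num)
    intro x hx'
    have : (0:ℝ) ≤ 2 - x := by linarith [hx'.2]
    positivity
  have hV1cont : Continuous V1 :=
    continuous_iff_continuousAt.mpr fun t => (hDeriv t).continuousAt
  -- integral of Xt^2 facts
  set I : ℝ := ∫ t in Set.Ici (0:ℝ), (Xt t) ^ 2 with hIdef
  have hI0 : 0 ≤ I := setIntegral_nonneg measurableSet_Ici fun t _ => sq_nonneg _
  have hXcont2 : Continuous fun s => (Xt s) ^ 2 := hXcont.pow 2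
  have hXle : ∀ t : ℝ, 0 ≤ t → (∫ s in (0:ℝ)..t, (Xt s) ^ 2) ≤ I := by
    intro t htt
    rw [intervalIntegral.integral_of_le htt]
    apply setIntegral_mono_set hXL2
    · exact Filter.Eventually.of_forall fun s => sq_nonneg _
    · exact HasSubset.Subset.eventuallyLE fun s hs => le_of_lt hs.1
  -- FTC-derived derivatives
  have hFTC_X : ∀ t : ℝ, HasDerivAt (fun u => ∫ s in (0:ℝ)..u, (Xt s) ^ 2) ((Xt t) ^ 2) t :=
    fun t => (hXcont2.integral_hasStrictDerivAt 0 t).hasDerivAt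
  have hFTC_V : ∀ t : ℝ, HasDerivAt (fun u => ∫ s in (0:ℝ)..u, V1 s) (V1 t) t :=
    fun t => (hV1cont.integral_hasStrictDerivAt 0 t).hasDerivAt
  -- boundedness: h := V1 - C * ∫ X²  is antitone
  have hbd : ∀ t : ℝ, 0 ≤ t → V1 t ≤ V1 0 + C * I := by
    set h : ℝ → ℝ := fun t => V1 t - C * ∫ s in (0:ℝ)..t, (Xt s) ^ 2 with hhdef
    have hh' : ∀ t : ℝ, HasDerivAt h (D t - C * (Xt t) ^ 2) t :=
      fun t => (hDeriv t).sub ((hFTC_X t).const_mul C)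
    have hanti : Antitone h := by
      apply antitone_of_deriv_nonpos
      · exact fun t => (hh' t).differentiableAt
      · intro t
        rw [(hh' t).deriv]
        have h1 := hIneq t
        have h2 : (b / 4) * V1 t ≤ 0 :=
          mul_nonpos_of_nonpos_of_nonneg (by linarith) (hV1nonneg t)
        linarith
    intro t htt
    have := hanti htt
    have h0 : h 0 = V1 0 := by simp [hhdef]
    have hXt := hXle t htt
    have : h t ≤ V1 0 := h0 ▸ this
    have : V1 t - C * ∫ s in (0:ℝ)..t, (Xt s) ^ 2 ≤ V1 0 := this
    nlinarith [mul_le_mul_of_nonneg_left hXt hC0]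
  -- integrability: k := V1 - (b/4) ∫ V1 - C ∫ X² is antitone
  have hint : ∀ t : ℝ, 0 ≤ t → (∫ s in (0:ℝ)..t, V1 s) ≤ (V1 0 + C * I) / (-b / 4) := by
    set k : ℝ → ℝ := fun t =>
      V1 t - (b / 4) * (∫ s in (0:ℝ)..t, V1 s) - C * ∫ s in (0:ℝ)..t, (Xt s) ^ 2 with hkdef
    have hk' : ∀ t : ℝ, HasDerivAt k (D t - (b / 4) * V1 t - C * (Xt t) ^ 2) t :=
      fun t => ((hDeriv t).sub ((hFTC_V t).const_mul (b / 4))).sub ((hFTC_X t).const_mul C)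
    have hanti : Antitone k := by
      apply antitone_of_deriv_nonpos
      · exact fun t => (hk' t).differentiableAt
      · intro t
        rw [(hk' t).deriv]
        linarith [hIneq t]
    intro t htt
    have hk0 : k 0 = V1 0 := by simp [hkdef]
    have hkt : k t ≤ V1 0 := hk0 ▸ hanti htt
    have h1 : V1 t - (b / 4) * (∫ s in (0:ℝ)..t, V1 s) - C * ∫ s in (0:ℝ)..t, (Xt s) ^ 2
        ≤ V1 0 := hkt
    have h2 := hXle t htt
    have h3 := hV1nonneg t
    have h4 : (-b / 4) * (∫ s in (0:ℝ)..t, V1 s) ≤ V1 0 + C * I := by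
      nlinarith [mul_le_mul_of_nonneg_left h2 hC0]
    have hb4 : (0:ℝ) < -b / 4 := by linarith
    rw [le_div_iff₀ hb4]
    nlinarith [h4]
  refine ⟨⟨C, hC0, D, fun t _ => hDeriv t, fun t _ => hIneq t⟩, ?_, ⟨V1 0 + C * I, hbd⟩⟩
  rw [integrableOn_Ici_iff_integrableOn_Ioi]
  apply MeasureTheory.integrableOn_Ioi_of_intervalIntegral_norm_bounded
    ((V1 0 + C * I) / (-b / 4)) 0 (fun i : ℝ => hV1cont.integrableOn_Ioc) Filter.tendsto_id
  filter_upwards [Filter.eventually_ge_atTop (0:ℝ)] with i hi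
  have hnorm : (∫ x in (0:ℝ)..(id i), ‖V1 x‖) = ∫ x in (0:ℝ)..i, V1 x :=
    intervalIntegral.integral_congr fun x _ => Real.norm_of_nonneg (hV1nonneg x)
  rw [hnorm]
  exact hint i hi
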